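/- For any real numbers ρ, η with 0 < ρ < η < 1, any integers K ≥ 1 and T ≥ 2, and any nonnegative reals a₁, …, a_{T−1}, the weighted triple sum satisfies Σ_{t=2}^{T} Σ_{i=0}^{K−1} η^i Σ_{j=0}^{t−2−i} ρ^j a_{t−1−i−j} ≤ (η / ((η−ρ)(1−η))) · Σ_{s=1}^{T−1} a_s, where the inner sum over j is empty (equal to zero) whenever t − 2 − i < 0. -/

import Mathlib

open Finset

/-- auxiliary convolution sum -/
private def convSum (ρ : ℝ) (a : ℕ → ℝ) (r : ℕ) : ℝ :=
  ∑ j ∈ Finset.range (r - 1), ρ ^ j * a (r - 1 - j)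

private lemma convSum_nonneg (ρ : ℝ) (h0 : 0 ≤ ρ) (a : ℕ → ℝ) (ha : ∀ s, 0 ≤ a s)
    (r : ℕ) : 0 ≤ convSum ρ a r :=
  Finset.sum_nonneg fun j _ => mul_nonneg (pow_nonneg h0 j) (ha _)

private lemma conv_key (ρ : ℝ) (h0 : 0 ≤ ρ) (h1 : ρ < 1) (a : ℕ → ℝ)
    (ha : ∀ s, 0 ≤ a s) :
    ∀ N, (∑ r ∈ Icc 2 N, convSum ρ a r) + ρ / (1 - ρ) * convSum ρ a N
      ≤ 1 / (1 - ρ) * ∑ s ∈ Icc 1 (N - 1), a s := by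
  have h1ρ : (0:ℝ) < 1 - ρ := by linarith
  intro N
  induction N with
  | zero => simp [convSum]
  | succ N ih =>
    rcases Nat.eq_zero_or_pos N with rfl | hN
    · simp [convSum]
    · obtain ⟨M, rfl⟩ : ∃ M, N = M + 1 := ⟨N - 1, by omega⟩
      simp only [Nat.add_sub_cancel] at ih ⊢
      have hstep : convSum ρ a (M + 1 + 1) = a (M + 1) + ρ * convSum ρ a (M + 1) := by
        simp only [convSum, Nat.add_sub_cancel]
        rw [Finset.sum_range_succ']
        have hcg : ∀ i ∈ Finset.range M,
            ρ ^ (i + 1) * a (M + 1 - (i + 1)) = ρ * (ρ ^ i * a (M - i)) := by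
          intro i _
          rw [show M + 1 - (i + 1) = M - i by omega, pow_succ]
          ring
        rw [Finset.sum_congr rfl hcg, ← Finset.mul_sum]
        simp [add_comm]
      rw [Finset.sum_Icc_succ_top (show 2 ≤ M + 1 + 1 by omega),
        Finset.sum_Icc_succ_top (show 1 ≤ M + 1 by omega)]
      have hq : 1 + ρ * (1 / (1 - ρ)) = 1 / (1 - ρ) := by field_simp; ring
      have expand : convSum ρ a (M + 1 + 1) + ρ / (1 - ρ) * convSum ρ a (M + 1 + 1)
          = 1 / (1 - ρ) * a (M + 1) + ρ / (1 - ρ) * convSum ρ a (M + 1) := by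
        rw [hstep, show ρ / (1 - ρ) = ρ * (1 / (1 - ρ)) by ring]
        linear_combination (a (M + 1) + ρ * convSum ρ a (M + 1)) * hq
      have hmul : 1 / (1 - ρ) * ((∑ s ∈ Icc 1 M, a s) + a (M + 1))
          = 1 / (1 - ρ) * (∑ s ∈ Icc 1 M, a s) + 1 / (1 - ρ) * a (M + 1) := by ring
      rw [hmul]
      linarith [ih, expand]

theorem geometric_triple_sum_bound
    (ρ η : ℝ) (hρ0 : 0 < ρ) (hρη : ρ < η) (hη1 : η < 1)
    (K T : ℕ) (hK : 1 ≤ K) (hT : 2 ≤ T)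
    (a : ℕ → ℝ) (ha : ∀ s ∈ Finset.Icc 1 (T - 1), 0 ≤ a s) :
    ∑ t ∈ Finset.Icc 2 T, ∑ i ∈ Finset.range K, η ^ i *
        ∑ j ∈ Finset.range (t - 1 - i), ρ ^ j * a (t - 1 - i - j)
      ≤ η / ((η - ρ) * (1 - η)) * ∑ s ∈ Finset.Icc 1 (T - 1), a s := by
  have hη0 : 0 < η := lt_trans hρ0 hρη
  have h1η : (0:ℝ) < 1 - η := by linarith
  have h1ρ : (0:ℝ) < 1 - ρ := by linarith
  have hηρ : (0:ℝ) < η - ρ := by linarith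
  set a' : ℕ → ℝ := fun s => if 1 ≤ s ∧ s ≤ T - 1 then a s else 0 with ha'def
  have ha'0 : ∀ s, 0 ≤ a' s := by
    intro s
    simp only [ha'def]
    split_ifs with h
    · exact ha s (Finset.mem_Icc.mpr h)
    · exact le_refl 0
  have hS' : ∑ s ∈ Finset.Icc 1 (T - 1), a' s = ∑ s ∈ Finset.Icc 1 (T - 1), a s := by
    refine Finset.sum_congr rfl fun s hs => ?_
    simp only [ha'def]
    rw [if_pos (Finset.mem_Icc.mp hs)]
  have hS'0 : 0 ≤ ∑ s ∈ Finset.Icc 1 (T - 1), a' s :=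
    Finset.sum_nonneg fun s _ => ha'0 s
  set S' := ∑ s ∈ Finset.Icc 1 (T - 1), a' s with hS'def
  have hcnn := convSum_nonneg ρ hρ0.le a' ha'0
  -- the convolution rows bound
  have hC4 : ∑ r ∈ Finset.Icc 2 T, convSum ρ a' r ≤ 1 / (1 - ρ) * S' := by
    have key := conv_key ρ hρ0.le (by linarith : ρ < 1) a' ha'0 T
    have h2 : 0 ≤ ρ / (1 - ρ) * convSum ρ a' T :=
      mul_nonneg (div_nonneg hρ0.le h1ρ.le) (hcnn T)
    rw [hS'def]
    linarith
  have stepC : ∀ i : ℕ, ∑ t ∈ Finset.Icc 2 T, convSum ρ a' (t - i) ≤ 1 / (1 - ρ) * S' := by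
    intro i
    calc ∑ t ∈ Finset.Icc 2 T, convSum ρ a' (t - i)
        = ∑ t ∈ Finset.Icc (2 + i) T, convSum ρ a' (t - i) := by
          refine (Finset.sum_subset (Finset.Icc_subset_Icc_left (by omega)) ?_).symm
          intro t ht hnt
          rw [Finset.mem_Icc] at ht
          rw [Finset.mem_Icc] at hnt
          have : t - i - 1 = 0 := by omega
          simp [convSum, this]
      _ = ∑ r ∈ Finset.Icc 2 (T - i), convSum ρ a' r := by
          refine Finset.sum_bij' (fun t _ => t - i) (fun r _ => r + i) ?_ ?_ ?_ ?_ ?_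
          · intro t ht
            simp only [Finset.mem_Icc] at ht ⊢
            omega
          · intro r hr
            simp only [Finset.mem_Icc] at hr ⊢
            omega
          · intro t ht
            rw [Finset.mem_Icc] at ht
            show t - i + i = t
            omega
          · intro r hr
            rw [Finset.mem_Icc] at hr
            show r + i - i = r
            omega
          · intro t ht
            rfl
      _ ≤ ∑ r ∈ Finset.Icc 2 T, convSum ρ a' r := by
          refine Finset.sum_le_sum_of_subset_of_nonneg
            (Finset.Icc_subset_Icc_right (Nat.sub_le T i)) fun r _ _ => hcnn r
      _ ≤ 1 / (1 - ρ) * S' := hC4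
  have hinner : ∀ t ∈ Finset.Icc 2 T, ∀ i : ℕ,
      (∑ j ∈ Finset.range (t - 1 - i), ρ ^ j * a (t - 1 - i - j)) = convSum ρ a' (t - i) := by
    intro t ht i
    rw [Finset.mem_Icc] at ht
    simp only [convSum]
    rw [show t - i - 1 = t - 1 - i by omega]
    refine Finset.sum_congr rfl fun j hj => ?_
    rw [Finset.mem_range] at hj
    congr 1
    simp only [ha'def]
    rw [if_pos ⟨by omega, by omega⟩]
  have hgeom : ∑ i ∈ Finset.range K, η ^ i ≤ 1 / (1 - η) := by
    have h := geom_sum_eq (ne_of_lt hη1) K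
    have hpow : 0 ≤ η ^ K := pow_nonneg hη0.le K
    have he : (η ^ K - 1) / (η - 1) = (1 - η ^ K) / (1 - η) := by
      rw [div_eq_div_iff (by linarith) (by linarith)]
      ring
    rw [h, he, div_le_div_iff₀ h1η h1η]
    nlinarith
  have hcoef : 1 / (1 - η) * (1 / (1 - ρ)) ≤ η / ((η - ρ) * (1 - η)) := by
    rw [div_mul_div_comm, one_mul, div_le_div_iff₀ (by positivity) (by positivity)]
    nlinarith [mul_pos (mul_pos h1η hρ0) h1η]
  calc ∑ t ∈ Finset.Icc 2 T, ∑ i ∈ Finset.range K, η ^ i *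
        ∑ j ∈ Finset.range (t - 1 - i), ρ ^ j * a (t - 1 - i - j)
      = ∑ t ∈ Finset.Icc 2 T, ∑ i ∈ Finset.range K, η ^ i * convSum ρ a' (t - i) := by
        refine Finset.sum_congr rfl fun t ht => Finset.sum_congr rfl fun i _ => ?_
        rw [hinner t ht i]
    _ = ∑ i ∈ Finset.range K, η ^ i * ∑ t ∈ Finset.Icc 2 T, convSum ρ a' (t - i) := by
        rw [Finset.sum_comm]
        exact Finset.sum_congr rfl fun i _ => (Finset.mul_sum _ _ _).symm
    _ ≤ ∑ i ∈ Finset.range K, η ^ i * (1 / (1 - ρ) * S') := by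
        refine Finset.sum_le_sum fun i _ => ?_
        exact mul_le_mul_of_nonneg_left (stepC i) (pow_nonneg hη0.le i)
    _ = (∑ i ∈ Finset.range K, η ^ i) * (1 / (1 - ρ) * S') := by
        rw [← Finset.sum_mul]
    _ ≤ 1 / (1 - η) * (1 / (1 - ρ) * S') := by
        refine mul_le_mul_of_nonneg_right hgeom ?_
        positivity
    _ ≤ η / ((η - ρ) * (1 - η)) * S' := by
        rw [← mul_assoc]
        exact mul_le_mul_of_nonneg_right hcoef hS'0
    _ = η / ((η - ρ) * (1 - η)) * ∑ s ∈ Finset.Icc 1 (T - 1), a s := by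
        rw [hS']
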